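/- Let G be an M-connected mixed direction-length graph. Then the rigidity matroid of G has an ear decomposition all of whose circuits are mixed circuits. -/

import Mathlib

open scoped Classical

noncomputable section

/-- A direction-length graph: a finite vertex set together with a set of
direction edges and a set of length edges, each an unordered pair of vertices.
(`true` marks direction edges, `false` marks length edges.) -/
structure DLGraph (V : Type) where
  verts : Finset V
  dir : Finset (Sym2 V)
  len : Finset (Sym2 V)

namespace DLGraph

variable {V : Type} [DecidableEq V]

/-- Well-formedness: loop-free and all endvertices belong to the vertex set. -/
def WellFormed (G : DLGraph V) : Prop :=
  (∀ e ∈ G.dir, ¬ e.IsDiag ∧ ∀ v ∈ e, v ∈ G.verts) ∧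
  (∀ e ∈ G.len, ¬ e.IsDiag ∧ ∀ v ∈ e, v ∈ G.verts)

/-- The edge set; `true` marks direction edges, `false` length edges. -/
def edges (G : DLGraph V) : Finset (Sym2 V × Bool) :=
  G.dir.image (fun s => (s, true)) ∪ G.len.image (fun s => (s, false))

def typeSet (G : DLGraph V) (t : Bool) : Finset (Sym2 V) := if t then G.dir else G.len

/-- A graph is mixed if it has both a direction and a length edge. -/
def Mixed (G : DLGraph V) : Prop := G.dir.Nonempty ∧ G.len.Nonempty

/-- A graph is pure if all its edges are of one type. -/
def Pure (G : DLGraph V) : Prop := G.dir = ∅ ∨ G.len = ∅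

/-- Pure of a given type: no edges of the opposite type. -/
def PureOfType (G : DLGraph V) (t : Bool) : Prop := (if t then G.len else G.dir) = ∅

/-- An edge set is mixed if it contains edges of both types. -/
def MixedEdgeSet (C : Finset (Sym2 V × Bool)) : Prop :=
  (∃ e ∈ C, e.2 = true) ∧ (∃ e ∈ C, e.2 = false)

/-- `p u - p v`, rotated by 90 degrees for direction edges. -/
def dvec (p : V → ℝ × ℝ) (t : Bool) (u v : V) : ℝ × ℝ :=
  if t then ((p u - p v).2, -((p u - p v).1)) else p u - p v

/-- The row of the rigidity matrix corresponding to an edge, viewed as a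
vector in `V → ℝ × ℝ`. -/
def edgeRow (p : V → ℝ × ℝ) (e : Sym2 V × Bool) : V → ℝ × ℝ :=
  Sym2.lift
    ⟨fun u v w =>
      (if w = u then dvec p e.2 u v else 0) + (if w = v then dvec p e.2 v u else 0),
      fun u v => funext fun w => add_comm _ _⟩ e.1

/-- A realisation is generic if the coordinates of the vertices of `G` are
algebraically independent over `ℚ`. -/
def Generic (G : DLGraph V) (p : V → ℝ × ℝ) : Prop :=
  AlgebraicIndependent ℚ
    (fun x : {v // v ∈ G.verts} × Bool => if x.2 then (p x.1.1).1 else (p x.1.1).2)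

/-- A set of edges is independent if its rigidity-matrix rows are linearly
independent for every generic realisation. -/
def Indep (G : DLGraph V) (S : Finset (Sym2 V × Bool)) : Prop :=
  ∀ p : V → ℝ × ℝ, G.Generic p →
    LinearIndependent ℝ (fun e : {e // e ∈ S} => edgeRow p e.1)

/-- A circuit of the rigidity matroid of `G`: a dependent edge set all of whose
proper subsets are independent. -/
def IsCircuit (G : DLGraph V) (C : Finset (Sym2 V × Bool)) : Prop :=
  C ⊆ G.edges ∧ ¬ G.Indep C ∧ ∀ C' ⊂ C, G.Indep C'

/-- `G` is M-connected: it has at least two edges and every pair of distinct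
edges lies in a common circuit of the rigidity matroid. -/
def MConnected (G : DLGraph V) : Prop :=
  2 ≤ G.edges.card ∧
  ∀ e ∈ G.edges, ∀ f ∈ G.edges, e ≠ f → ∃ C, G.IsCircuit C ∧ e ∈ C ∧ f ∈ C

/-- The rank of the rigidity matrix of `(G, p)`. -/
noncomputable def rank (G : DLGraph V) (p : V → ℝ × ℝ) : ℕ :=
  Module.finrank ℝ
    (Submodule.span ℝ (Set.range (fun e : {e // e ∈ G.edges} => edgeRow p e.1)))

/-- `G` is rigid if its rigidity matrix has rank `2|V| - 2` for every generic
realisation. -/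
def Rigid (G : DLGraph V) : Prop :=
  ∀ p : V → ℝ × ℝ, G.Generic p → G.rank p = 2 * G.verts.card - 2

def deleteEdge (G : DLGraph V) (e : Sym2 V × Bool) : DLGraph V :=
  ⟨G.verts, if e.2 then G.dir.erase e.1 else G.dir,
    if e.2 then G.len else G.len.erase e.1⟩

/-- `G` is redundantly rigid if `G - e` is rigid for every edge `e`. -/
def RedundantlyRigid (G : DLGraph V) : Prop := ∀ e ∈ G.edges, (G.deleteEdge e).Rigid

def addEdge (G : DLGraph V) (e : Sym2 V) (t : Bool) : DLGraph V :=
  ⟨G.verts, if t then insert e G.dir else G.dir, if t then G.len else insert e G.len⟩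

def addVert (G : DLGraph V) (v : V) : DLGraph V := ⟨insert v G.verts, G.dir, G.len⟩

def union (G H : DLGraph V) : DLGraph V :=
  ⟨G.verts ∪ H.verts, G.dir ∪ H.dir, G.len ∪ H.len⟩

/-- Adjacency: two distinct vertices joined by an edge of either type. -/
def Adj (G : DLGraph V) (u v : V) : Prop :=
  u ≠ v ∧ (s(u, v) ∈ G.dir ∨ s(u, v) ∈ G.len)

/-- `G` is connected: any two of its vertices are joined by a walk. -/
def Connected (G : DLGraph V) : Prop :=
  ∀ u ∈ G.verts, ∀ v ∈ G.verts, Relation.ReflTransGen G.Adj u v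

def deleteVerts (G : DLGraph V) (X : Finset V) : DLGraph V :=
  ⟨G.verts \ X, G.dir.filter (fun e => ∀ v ∈ e, v ∉ X),
    G.len.filter (fun e => ∀ v ∈ e, v ∉ X)⟩

/-- `G` is k-connected: more than `k` vertices, and removing fewer than `k`
vertices always leaves a connected graph. -/
def KConnected (k : ℕ) (G : DLGraph V) : Prop :=
  k < G.verts.card ∧ ∀ X : Finset V, X.card < k → (G.deleteVerts X).Connected

def inducedSubgraph (G : DLGraph V) (X : Finset V) : DLGraph V :=
  ⟨G.verts ∩ X, G.dir.filter (fun e => ∀ v ∈ e, v ∈ X),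
    G.len.filter (fun e => ∀ v ∈ e, v ∈ X)⟩

/-- Edges of a given type incident with a vertex. -/
def incident (G : DLGraph V) (t : Bool) (v : V) : Finset (Sym2 V) :=
  (G.typeSet t).filter (fun e => v ∈ e)

def degree (G : DLGraph V) (v : V) : ℕ :=
  (G.incident true v).card + (G.incident false v).card

/-- A node is a vertex of degree three. -/
def IsNode (G : DLGraph V) (v : V) : Prop := v ∈ G.verts ∧ G.degree v = 3

def nodeSet (G : DLGraph V) : Finset V := G.verts.filter (fun v => G.degree v = 3)

/-- A series node: a node of degree exactly two in the node subgraph. -/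
def SeriesNode (G : DLGraph V) (v : V) : Prop :=
  G.IsNode v ∧ (G.inducedSubgraph G.nodeSet).degree v = 2

/-- A leaf node: a node of degree at most one in the node subgraph. -/
def LeafNode (G : DLGraph V) (v : V) : Prop :=
  G.IsNode v ∧ (G.inducedSubgraph G.nodeSet).degree v ≤ 1

/-- The neighbourhood of a vertex. -/
def nbrs (G : DLGraph V) (v : V) : Finset V := G.verts.filter (fun u => G.Adj u v)

/-- The edges induced by a vertex set. -/
def inducedEdges (G : DLGraph V) (X : Finset V) : Finset (Sym2 V × Bool) :=
  G.edges.filter (fun e => ∀ v ∈ e.1, v ∈ X)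

def inducedOfType (G : DLGraph V) (t : Bool) (X : Finset V) : Finset (Sym2 V) :=
  (G.typeSet t).filter (fun e => ∀ v ∈ e, v ∈ X)

/-- `X` is mixed critical: it induces an independent edge set with
`i(X) = 2|X| - 2`. -/
def MixedCritical (G : DLGraph V) (X : Finset V) : Prop :=
  2 ≤ X.card ∧ X ⊆ G.verts ∧ G.Indep (G.inducedEdges X) ∧
  (G.inducedEdges X).card = 2 * X.card - 2

/-- `X` is direction critical: independent, `i(X) = 2|X| - 3`, no induced
length edges. -/
def DirCritical (G : DLGraph V) (X : Finset V) : Prop :=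
  2 ≤ X.card ∧ X ⊆ G.verts ∧ G.Indep (G.inducedEdges X) ∧
  (G.inducedEdges X).card = 2 * X.card - 3 ∧ G.inducedOfType false X = ∅

/-- `X` is length critical: independent, `i(X) = 2|X| - 3`, no induced
direction edges. -/
def LenCritical (G : DLGraph V) (X : Finset V) : Prop :=
  2 ≤ X.card ∧ X ⊆ G.verts ∧ G.Indep (G.inducedEdges X) ∧
  (G.inducedEdges X).card = 2 * X.card - 3 ∧ G.inducedOfType true X = ∅

def PureCriticalOfType (G : DLGraph V) (t : Bool) (X : Finset V) : Prop :=
  if t then G.DirCritical X else G.LenCritical X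

/-- `G` is a mixed circuit. -/
def IsMixedCircuitGraph (G : DLGraph V) : Prop := G.Mixed ∧ G.IsCircuit G.edges

/-- The 1-reduction of `G` at `v` onto the edge `e` of type `t`. -/
def oneReduce (G : DLGraph V) (v : V) (e : Sym2 V) (t : Bool) : DLGraph V :=
  ⟨G.verts.erase v,
    if t then insert e (G.dir.filter (fun f => v ∉ f)) else G.dir.filter (fun f => v ∉ f),
    if t then G.len.filter (fun f => v ∉ f) else insert e (G.len.filter (fun f => v ∉ f))⟩

/-- Legality of a 1-reduction at a node `v` onto neighbours `x, y`, adding a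
new edge of type `t` (required to match `v`'s type when `v` is pure). -/
def OneReduction (G : DLGraph V) (v x y : V) (t : Bool) : Prop :=
  G.IsNode v ∧ x ∈ G.nbrs v ∧ y ∈ G.nbrs v ∧ x ≠ y ∧
  (G.incident false v = ∅ → t = true) ∧
  (G.incident true v = ∅ → t = false) ∧
  s(x, y) ∉ G.typeSet t

/-- For a mixed circuit: a node is admissible if some 1-reduction at it yields
a mixed circuit. -/
def AdmissibleNodeC (G : DLGraph V) (v : V) : Prop :=
  ∃ (x y : V) (t : Bool), G.OneReduction v x y t ∧
    IsMixedCircuitGraph (G.oneReduce v s(x, y) t)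

/-- For an M-connected mixed graph: a node is admissible if some 1-reduction
at it yields a mixed M-connected graph. -/
def AdmissibleNodeM (G : DLGraph V) (v : V) : Prop :=
  ∃ (x y : V) (t : Bool), G.OneReduction v x y t ∧
    (G.oneReduce v s(x, y) t).Mixed ∧ (G.oneReduce v s(x, y) t).MConnected

/-- An edge is admissible if deleting it leaves an M-connected graph. -/
def AdmissibleEdgeM (G : DLGraph V) (e : Sym2 V × Bool) : Prop :=
  e ∈ G.edges ∧ (G.deleteEdge e).MConnected

/-- `(H1, H2)` is a 2-separation of `G`. -/
def Is2Sep (G H1 H2 : DLGraph V) : Prop :=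
  H1.union H2 = G ∧ 3 ≤ H1.verts.card ∧ 3 ≤ H2.verts.card ∧
  (H1.verts ∩ H2.verts).card = 2

def EdgeDisjoint2Sep (G H1 H2 : DLGraph V) : Prop :=
  G.Is2Sep H1 H2 ∧ H1.dir ∩ H2.dir = ∅ ∧ H1.len ∩ H2.len = ∅

/-- A 2-separation is direction-balanced if both sides contain a direction
edge not induced by the 2-vertex-cut. -/
def SepDirBalanced (H1 H2 : DLGraph V) : Prop :=
  (∃ e ∈ H1.dir, ¬ ∀ v ∈ e, v ∈ H1.verts ∩ H2.verts) ∧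
  (∃ e ∈ H2.dir, ¬ ∀ v ∈ e, v ∈ H1.verts ∩ H2.verts)

/-- `G` is direction-balanced if all its 2-separations are. -/
def DirBalanced (G : DLGraph V) : Prop :=
  ∀ H1 H2 : DLGraph V, G.Is2Sep H1 H2 → SepDirBalanced H1 H2

def twoSumGraph (G1 G2 : DLGraph V) (e : Sym2 V) (t : Bool) : DLGraph V :=
  ⟨G1.verts ∪ G2.verts,
    if t then (G1.dir ∪ G2.dir).erase e else G1.dir ∪ G2.dir,
    if t then G1.len ∪ G2.len else (G1.len ∪ G2.len).erase e⟩

/-- `G` is the 2-sum of `G1` with the pure graph `G2`. -/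
def IsTwoSum (G G1 G2 : DLGraph V) : Prop :=
  ∃ (x y : V) (t : Bool), x ≠ y ∧ G1.verts ∩ G2.verts = {x, y} ∧
    G2.PureOfType t ∧ s(x, y) ∈ G1.typeSet t ∧ s(x, y) ∈ G2.typeSet t ∧
    G = twoSumGraph G1 G2 s(x, y) t

/-- All unordered pairs of distinct vertices of `X`. -/
def completeOn (X : Finset V) : Finset (Sym2 V) :=
  ((X ×ˢ X).image (fun p => s(p.1, p.2))).filter (fun e => ¬ e.IsDiag)

def IsDirPureK4 (H : DLGraph V) : Prop :=
  H.verts.card = 4 ∧ H.len = ∅ ∧ H.dir = completeOn H.verts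

def IsLenPureK4 (H : DLGraph V) : Prop :=
  H.verts.card = 4 ∧ H.dir = ∅ ∧ H.len = completeOn H.verts

def IsPureK4 (H : DLGraph V) : Prop := IsDirPureK4 H ∨ IsLenPureK4 H

/-- `K3+`: a length triangle plus two direction edges. -/
def IsK3Plus (H : DLGraph V) : Prop :=
  ∃ a b c : V, a ≠ b ∧ a ≠ c ∧ b ≠ c ∧ H.verts = {a, b, c} ∧
    H.len = {s(a, b), s(a, c), s(b, c)} ∧ H.dir = {s(a, b), s(b, c)}

/-- `K3-`: a direction triangle plus two length edges. -/
def IsK3Minus (H : DLGraph V) : Prop :=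
  ∃ a b c : V, a ≠ b ∧ a ≠ c ∧ b ≠ c ∧ H.verts = {a, b, c} ∧
    H.dir = {s(a, b), s(a, c), s(b, c)} ∧ H.len = {s(a, b), s(b, c)}

/-- Edge addition: a new edge between vertices of `G` not already joined by an
edge of that type. -/
def IsEdgeAddition (G G' : DLGraph V) : Prop :=
  ∃ (e : Sym2 V) (t : Bool), ¬ e.IsDiag ∧ (∀ v ∈ e, v ∈ G.verts) ∧
    e ∉ G.typeSet t ∧ G' = G.addEdge e t

/-- 1-extension: delete an edge `xy` of type `t` and add a new vertex `v`
joined to `x`, `y` and some `z`, with at least one new edge of type `t`. -/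
def IsOneExtension (G G' : DLGraph V) : Prop :=
  ∃ (x y z v : V) (t t1 t2 t3 : Bool),
    x ≠ y ∧ x ∈ G.verts ∧ y ∈ G.verts ∧ z ∈ G.verts ∧ v ∉ G.verts ∧
    s(x, y) ∈ G.typeSet t ∧
    (z = x → t3 ≠ t1) ∧ (z = y → t3 ≠ t2) ∧
    (t1 = t ∨ t2 = t ∨ t3 = t) ∧
    G' = ((((G.deleteEdge (s(x, y), t)).addVert v).addEdge s(v, x) t1).addEdge
            s(v, y) t2).addEdge s(v, z) t3

/-- One construction step: an edge addition, a 1-extension, or a 2-sum of the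
current graph with a graph satisfying `K4Pred`. -/
def ConstructionStep (K4Pred : DLGraph V → Prop) (H H' : DLGraph V) : Prop :=
  IsEdgeAddition H H' ∨ IsOneExtension H H' ∨
  ∃ K : DLGraph V, K4Pred K ∧ IsTwoSum H' H K

/-- `G` can be obtained from `K3+` or `K3-` by a sequence of construction
steps. -/
def Constructible (K4Pred : DLGraph V → Prop) (G : DLGraph V) : Prop :=
  ∃ H0 : DLGraph V, (IsK3Plus H0 ∨ IsK3Minus H0) ∧
    Relation.ReflTransGen (ConstructionStep K4Pred) H0 G

/-- The union `C1 ∪ ... ∪ Ci` (first `i` members of the sequence). -/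
def partialUnion {m : ℕ} (Cs : Fin m → Finset (Sym2 V × Bool)) (i : ℕ) :
    Finset (Sym2 V × Bool) :=
  (Finset.univ.filter (fun j : Fin m => (j : ℕ) < i)).biUnion Cs

/-- An ear decomposition of the rigidity matroid of `G`. -/
def IsEarDecomposition (G : DLGraph V) {m : ℕ}
    (Cs : Fin m → Finset (Sym2 V × Bool)) : Prop :=
  1 ≤ m ∧ (∀ i, G.IsCircuit (Cs i)) ∧ partialUnion Cs m = G.edges ∧
  ∀ i : Fin m, 1 ≤ (i : ℕ) →
    (Cs i ∩ partialUnion Cs i).Nonempty ∧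
    (Cs i \ partialUnion Cs i).Nonempty ∧
    ∀ C', G.IsCircuit C' → (C' ∩ partialUnion Cs i).Nonempty →
      (C' \ partialUnion Cs i).Nonempty →
      ¬ (C' \ partialUnion Cs i) ⊂ (Cs i \ partialUnion Cs i)

/-- The vertices of `G` covered by an edge set. -/
def supportIn (G : DLGraph V) (C : Finset (Sym2 V × Bool)) : Finset V :=
  G.verts.filter (fun v => ∃ e ∈ C, v ∈ e.1)

/-- The subgraph of `G` induced by an edge set. -/
def edgeInduced (G : DLGraph V) (C : Finset (Sym2 V × Bool)) : DLGraph V :=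
  ⟨G.supportIn C, (C.filter (fun e => e.2 = true)).image Prod.fst,
    (C.filter (fun e => e.2 = false)).image Prod.fst⟩

/-- Unordered pairs with one element in `A - B` and the other in `B - A`. -/
def crossPairs (A B : Finset V) : Finset (Sym2 V) :=
  ((A \ B) ×ˢ (B \ A)).image (fun p => s(p.1, p.2))

/-- `d(A,B)`: the number of edges with one endvertex in `A - B` and the other
in `B - A`. -/
def dCount (G : DLGraph V) (A B : Finset V) : ℕ :=
  (G.dir.filter (fun e => e ∈ crossPairs A B)).card +
  (G.len.filter (fun e => e ∈ crossPairs A B)).card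

/-- Remove from `H` all edges induced by the vertex set `R`. -/
def removeInducedEdges (H : DLGraph V) (R : Finset V) : DLGraph V :=
  ⟨H.verts, H.dir.filter (fun e => ¬ ∀ v ∈ e, v ∈ R),
    H.len.filter (fun e => ¬ ∀ v ∈ e, v ∈ R)⟩

/-- Equivalent frameworks: same length of each length edge, and parallel
difference vectors along each direction edge. -/
def Equivalent (G : DLGraph V) (p q : V → ℝ × ℝ) : Prop :=
  (∀ e ∈ G.len, ∀ u v : V, e = s(u, v) →
    ((q u - q v).1) ^ 2 + ((q u - q v).2) ^ 2 =
      ((p u - p v).1) ^ 2 + ((p u - p v).2) ^ 2) ∧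
  (∀ e ∈ G.dir, ∀ u v : V, e = s(u, v) →
    (q u - q v).1 * (p u - p v).2 = (q u - q v).2 * (p u - p v).1)

/-- Congruent frameworks: `q` is obtained from `p` by a translation, possibly
composed with the point reflection `x ↦ -x`. -/
def Congruent (G : DLGraph V) (p q : V → ℝ × ℝ) : Prop :=
  ∃ c : ℝ × ℝ, (∀ v ∈ G.verts, q v = p v + c) ∨ (∀ v ∈ G.verts, q v = -(p v) + c)

/-- `(G, p)` is globally rigid. -/
def GloballyRigidAt (G : DLGraph V) (p : V → ℝ × ℝ) : Prop :=
  ∀ q : V → ℝ × ℝ, G.Equivalent p q → G.Congruent p q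

/-- `G` is globally rigid: every generic realisation is globally rigid. -/
def GloballyRigid (G : DLGraph V) : Prop :=
  ∀ p : V → ℝ × ℝ, G.Generic p → G.GloballyRigidAt p

/-- A feasible edge: admissible, and its deletion is direction-balanced. -/
def FeasibleEdge (G : DLGraph V) (e : Sym2 V × Bool) : Prop :=
  G.AdmissibleEdgeM e ∧ (G.deleteEdge e).DirBalanced

/-- A feasible node: it has an admissible 1-reduction whose result is
direction-balanced. -/
def FeasibleNode (G : DLGraph V) (v : V) : Prop :=
  ∃ (x y : V) (t : Bool), G.OneReduction v x y t ∧
    (G.oneReduce v s(x, y) t).Mixed ∧ (G.oneReduce v s(x, y) t).MConnected ∧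
    (G.oneReduce v s(x, y) t).DirBalanced

/-- `X` is a `w`-node-critical set: `w` is a node with neighbours `x, y, z`
where `{y, z} ⊆ X ⊆ V - {w, x}` and `d(x) ≥ 4`. -/
def VNodeCritical (G : DLGraph V) (w : V) (X : Finset V) : Prop :=
  G.IsNode w ∧
  ∃ x y z : V, x ≠ y ∧ x ≠ z ∧ y ≠ z ∧ G.nbrs w = {x, y, z} ∧
    y ∈ X ∧ z ∈ X ∧ X ⊆ G.verts ∧ w ∉ X ∧ x ∉ X ∧ 4 ≤ G.degree x

end DLGraph

end
section Minor

variable {F : Type*} [Field F] {ι J : Type*} [Fintype ι]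

/-- If some square "submatrix" (selection of columns via `φ`) of the matrix whose rows
are `N i` has nonzero determinant, the rows are linearly independent. -/
theorem linind_of_det (N : ι → J → F) (φ : ι → J)
    (hdet : (Matrix.of (fun i k => N i (φ k))).det ≠ 0) : LinearIndependent F N := by
  classical
  rw [Fintype.linearIndependent_iff]
  intro g hg
  have hvm : Matrix.vecMul g (Matrix.of (fun i k => N i (φ k))) = 0 := by
    funext k
    have := congrFun hg (φ k)
    simpa [Matrix.vecMul, dotProduct, Finset.sum_apply] using this
  by_contra hne
  push_neg at hne
  obtain ⟨i0, hi0⟩ := hne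
  have : (Matrix.of (fun i k => N i (φ k))).det = 0 := by
    rw [← Matrix.exists_vecMul_eq_zero_iff]
    exact ⟨g, by intro h; exact hi0 (congrFun h i0), hvm⟩
  exact hdet this

/-- Conversely, a linearly independent finite family of vectors in `J → F` admits a
square column-selection with nonzero determinant. -/
theorem exists_det_of_linind [Fintype J] (N : ι → J → F) (h : LinearIndependent F N) :
    ∃ φ : ι → J, (Matrix.of (fun i k => N i (φ k))).det ≠ 0 := by
  classical
  -- `Sep T`: coordinates in `T` separate linear combinations of the rows.
  set Sep : Finset J → Prop := fun T =>
    ∀ c : ι → F, (∀ j ∈ T, (∑ i, c i * N i j) = 0) → c = 0 with hSep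
  have hUniv : Sep Finset.univ := by
    intro c hc
    have : ∑ i, c i • N i = 0 := by
      funext j
      simpa [Finset.sum_apply] using hc j (Finset.mem_univ j)
    funext i
    exact Fintype.linearIndependent_iff.1 h c this i
  -- pick a Sep set of minimal cardinality
  obtain ⟨T, hTmem, hTmin⟩ := Finset.exists_min_image
    ((Finset.univ : Finset J).powerset.filter Sep) Finset.card
    ⟨Finset.univ, Finset.mem_filter.2 ⟨by simp, hUniv⟩⟩
  have hTSep : Sep T := (Finset.mem_filter.1 hTmem).2
  -- minimality: for each t ∈ T, removing t destroys separation
  have hmin : ∀ t ∈ T, ¬ Sep (T.erase t) := by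
    intro t ht hSepE
    have hmem : T.erase t ∈ ((Finset.univ : Finset J).powerset.filter Sep) :=
      Finset.mem_filter.2 ⟨by simp, hSepE⟩
    have := hTmin _ hmem
    have hlt : (T.erase t).card < T.card := Finset.card_erase_lt_of_mem ht
    omega
  -- witnesses: vectors vanishing on T.erase t but not at t
  have hwit : ∀ t ∈ T, ∃ c : ι → F, c ≠ 0 ∧ (∀ j ∈ T.erase t, (∑ i, c i * N i j) = 0) := by
    intro t ht
    by_contra hco
    push_neg at hco
    refine hmin t ht (fun c hc => ?_)
    by_contra hcne
    obtain ⟨j, hj, hne⟩ := hco c hcne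
    exact hne (hc j hj)
  -- the witnesses give |T| linearly independent elements of the span of the rows
  have cardTι : T.card = Fintype.card ι := by
    -- ≥ : Sep T gives injectivity of coordinate restriction on combinations
    have h1 : Fintype.card ι ≤ T.card := by
      -- the linear map c ↦ (j ∈ T ↦ ∑ c i * N i j) is injective
      let L : (ι → F) →ₗ[F] ({j // j ∈ T} → F) :=
        { toFun := fun c => fun j => ∑ i, c i * N i j.1
          map_add' := by
            intro a b; funext j; simp [add_mul, Finset.sum_add_distrib]
          map_smul' := by
            intro m a; funext j; simp [Finset.mul_sum, mul_assoc] }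
      have hLinj : Function.Injective L := by
        rw [← LinearMap.ker_eq_bot, LinearMap.ker_eq_bot']
        intro c hc
        refine hTSep c (fun j hj => ?_)
        exact congrFun hc ⟨j, hj⟩
      have := LinearMap.finrank_le_finrank_of_injective hLinj
      simpa [Module.finrank_pi] using this
    -- ≤ : the witness vectors are linearly independent in the span of rows
    have h2 : T.card ≤ Fintype.card ι := by
      set W := Submodule.span F (Set.range N) with hW
      have : Module.Finite F W := Module.Finite.span_of_finite F (Set.finite_range N)
      choose cw hcwne hcw using hwit
      -- y t = ∑ i, cw t i • N i  as an element of W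
      have hymem : ∀ (t : J) (ht : t ∈ T), (∑ i, cw t ht i • N i) ∈ W := by
        intro t ht
        exact Submodule.sum_mem _ (fun i _ =>
          Submodule.smul_mem _ _ (Submodule.subset_span ⟨i, rfl⟩))
      let y : {t // t ∈ T} → W := fun t => ⟨∑ i, cw t.1 t.2 i • N i, hymem t.1 t.2⟩
      have hyT : ∀ (t : {t // t ∈ T}) (s : J), s ∈ T → s ≠ t.1 →
          (y t : J → F) s = 0 := by
        intro t s hs hne
        have := hcw t.1 t.2 s (Finset.mem_erase.2 ⟨hne, hs⟩)
        simpa [y, Finset.sum_apply] using this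
      have hyt : ∀ (t : {t // t ∈ T}), (y t : J → F) t.1 ≠ 0 := by
        intro t hzero
        apply hcwne t.1 t.2
        refine hTSep _ (fun j hj => ?_)
        by_cases hjt : j = t.1
        · subst hjt
          simpa [y, Finset.sum_apply] using hzero
        · have := hyT t j hj hjt
          simpa [y, Finset.sum_apply] using this
      have hyli : LinearIndependent F y := by
        rw [Fintype.linearIndependent_iff]
        intro g hg t
        have := congrArg (fun w : W => (w : J → F) t.1) hg
        simp only [Submodule.coe_sum, Submodule.coe_smul] at this
        have h0 : ∑ s : {t // t ∈ T}, g s • ((y s : J → F) t.1) = 0 := by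
          simpa [Finset.sum_apply] using this
        have hsingle : ∑ s : {t // t ∈ T}, g s • ((y s : J → F) t.1)
            = g t • ((y t : J → F) t.1) := by
          refine Finset.sum_eq_single t (fun s _ hst => ?_) (by simp)
          have : (y s : J → F) t.1 = 0 := by
            refine hyT s t.1 t.2 ?_
            intro hEq
            exact hst (Subtype.ext hEq.symm)
          rw [this, smul_zero]
        rw [hsingle] at h0
        rcases smul_eq_zero.1 h0 with h | h
        · exact h
        · exact absurd h (hyt t)
      have hcard2 := hyli.fintype_card_le_finrank
      have hrank : Module.finrank F W ≤ Fintype.card ι := by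
        have := finrank_range_le_card (R := F) N
        simpa [Set.finrank] using this
      calc T.card = Fintype.card {t // t ∈ T} := (Fintype.card_coe T).symm
        _ ≤ Module.finrank F W := hcard2
        _ ≤ Fintype.card ι := hrank
    omega
  -- build the column selection
  have hcards : Fintype.card ι = Fintype.card {t // t ∈ T} := by
    rw [Fintype.card_coe]; omega
  let eqv : ι ≃ {t // t ∈ T} := Fintype.equivOfCardEq hcards
  refine ⟨fun i => (eqv i).1, ?_⟩
  intro hdet
  obtain ⟨g, hgne, hg⟩ := Matrix.exists_vecMul_eq_zero_iff.2 hdet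
  apply hgne
  refine hTSep g (fun j hj => ?_)
  have := congrFun hg (eqv.symm ⟨j, hj⟩)
  simpa [Matrix.vecMul, dotProduct, Equiv.apply_symm_apply] using this

/-- Transfer of linear independence along two ring homomorphisms into a field,
the second being injective. -/
theorem linearIndependent_transfer {R : Type*} [CommRing R]
    (M : ι → J → R) [Fintype J] (f g : R →+* F) (hg : Function.Injective g)
    (h : LinearIndependent F (fun i => fun j => f (M i j))) :
    LinearIndependent F (fun i => fun j => g (M i j)) := by
  classical
  obtain ⟨φ, hdet⟩ := exists_det_of_linind _ h
  have hcommf : (Matrix.of fun i k => f (M i (φ k)))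
      = (f.mapMatrix (Matrix.of fun i k => M i (φ k))) := rfl
  have hcommg : (Matrix.of fun i k => g (M i (φ k)))
      = (g.mapMatrix (Matrix.of fun i k => M i (φ k))) := rfl
  have hdet' : (Matrix.of fun i k => M i (φ k)).det ≠ 0 := by
    intro h0
    apply hdet
    rw [hcommf, ← RingHom.map_det, h0, map_zero]
  apply linind_of_det _ φ
  rw [hcommg, ← RingHom.map_det]
  intro h0
  exact hdet' (hg (h0.trans (map_zero g).symm))

end Minor
section Aux

open MvPolynomial

namespace DLGraph

variable {V : Type} [DecidableEq V]

lemma mem_edges_iff {G : DLGraph V} {e : Sym2 V × Bool} :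
    e ∈ G.edges ↔ (e.2 = true ∧ e.1 ∈ G.dir) ∨ (e.2 = false ∧ e.1 ∈ G.len) := by
  rcases e with ⟨s, b⟩
  simp only [edges, Finset.mem_union, Finset.mem_image]
  constructor
  · rintro (⟨s', hs', hEq⟩ | ⟨s', hs', hEq⟩)
    · obtain ⟨rfl, rfl⟩ := Prod.mk.injEq .. ▸ And.intro (congrArg Prod.fst hEq) (congrArg Prod.snd hEq)
      exact Or.inl ⟨rfl, hs'⟩
    · obtain ⟨rfl, rfl⟩ := Prod.mk.injEq .. ▸ And.intro (congrArg Prod.fst hEq) (congrArg Prod.snd hEq)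
      exact Or.inr ⟨rfl, hs'⟩
  · rintro (⟨rfl, hs⟩ | ⟨rfl, hs⟩)
    · exact Or.inl ⟨s, hs, rfl⟩
    · exact Or.inr ⟨s, hs, rfl⟩

lemma mem_verts_of_edge {G : DLGraph V} (hG : G.WellFormed) {e : Sym2 V × Bool}
    (he : e ∈ G.edges) : ∀ v ∈ e.1, v ∈ G.verts := by
  rcases mem_edges_iff.1 he with ⟨_, hs⟩ | ⟨_, hs⟩
  · exact (hG.1 e.1 hs).2
  · exact (hG.2 e.1 hs).2

lemma edgeRow_apply (p : V → ℝ × ℝ) (t : Bool) (u v w : V) :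
    edgeRow p (s(u, v), t) w =
      (if w = u then dvec p t u v else 0) + (if w = v then dvec p t v u else 0) := by
  simp [edgeRow]

lemma edgeRow_eq_zero {G : DLGraph V} (hG : G.WellFormed) (p : V → ℝ × ℝ)
    {e : Sym2 V × Bool} (he : e ∈ G.edges) {w : V} (hw : w ∉ G.verts) :
    edgeRow p e w = 0 := by
  rcases e with ⟨s, t⟩
  induction s using Sym2.ind with
  | _ u v =>
    have hu : u ∈ G.verts := mem_verts_of_edge hG he u (by simp)
    have hv : v ∈ G.verts := mem_verts_of_edge hG he v (by simp)
    rw [edgeRow_apply, if_neg (by rintro rfl; exact hw hu), if_neg (by rintro rfl; exact hw hv)]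
    simp

/-- The coordinates of a function `V → ℝ × ℝ` on the vertex set, as a linear map. -/
def coordsL (G : DLGraph V) : (V → ℝ × ℝ) →ₗ[ℝ] (({v // v ∈ G.verts} × Bool) → ℝ) where
  toFun f := fun x => if x.2 then (f x.1.1).1 else (f x.1.1).2
  map_add' f g := by funext x; by_cases h : x.2 <;> simp [h]
  map_smul' c f := by funext x; by_cases h : x.2 <;> simp [h]

/-- Functions vanishing off the vertex set. -/
def suppVerts (G : DLGraph V) : Submodule ℝ (V → ℝ × ℝ) where
  carrier := {f | ∀ v, v ∉ G.verts → f v = 0}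
  add_mem' hf hg v hv := by rw [Pi.add_apply, hf v hv, hg v hv, add_zero]
  zero_mem' v hv := rfl
  smul_mem' c f hf v hv := by rw [Pi.smul_apply, hf v hv, smul_zero]

lemma li_coords_iff {G : DLGraph V} (hG : G.WellFormed) {S : Finset (Sym2 V × Bool)}
    (hS : S ⊆ G.edges) (p : V → ℝ × ℝ) :
    LinearIndependent ℝ (fun e : {e // e ∈ S} => edgeRow p e.1) ↔
      LinearIndependent ℝ (fun e : {e // e ∈ S} => G.coordsL (edgeRow p e.1)) := by
  constructor
  · intro h
    have hdisj : Disjoint (Submodule.span ℝ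
        (Set.range (fun e : {e // e ∈ S} => edgeRow p e.1))) (LinearMap.ker G.coordsL) := by
      rw [Submodule.disjoint_def]
      intro x hx hker
      have hxs : x ∈ G.suppVerts := by
        refine Submodule.span_le.2 ?_ hx
        rintro _ ⟨e, rfl⟩
        exact fun v hv => edgeRow_eq_zero hG p (hS e.2) hv
      have hc : G.coordsL x = 0 := hker
      funext v
      by_cases hv : v ∈ G.verts
      · have h1 := congrFun hc (⟨⟨v, hv⟩, true⟩ : {v // v ∈ G.verts} × Bool)
        have h2 := congrFun hc (⟨⟨v, hv⟩, false⟩ : {v // v ∈ G.verts} × Bool)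
        simp only [coordsL, LinearMap.coe_mk, AddHom.coe_mk, if_pos, if_neg,
          Pi.zero_apply] at h1 h2
        exact Prod.ext (by simpa using h1) (by simpa using h2)
      · exact hxs v hv
    exact h.map hdisj
  · intro h
    exact LinearIndependent.of_comp G.coordsL h

/-- The coordinates of a realisation, matching the index type of `Generic`. -/
def gen (G : DLGraph V) (p : V → ℝ × ℝ) : ({v // v ∈ G.verts} × Bool) → ℝ :=
  fun x => if x.2 then (p x.1.1).1 else (p x.1.1).2

lemma generic_inj {G : DLGraph V} {p : V → ℝ × ℝ} (hp : G.Generic p) :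
    Function.Injective (MvPolynomial.aeval (R := ℚ) (G.gen p)) := hp

/-- Every edge row has a polynomial expression in the vertex coordinates,
uniform in the realisation. -/
lemma exists_polyRow {G : DLGraph V} (hG : G.WellFormed) {e : Sym2 V × Bool}
    (he : e ∈ G.edges) :
    ∃ Q : ({v // v ∈ G.verts} × Bool) → MvPolynomial ({v // v ∈ G.verts} × Bool) ℚ,
      ∀ (p : V → ℝ × ℝ) (x : {v // v ∈ G.verts} × Bool),
        MvPolynomial.aeval (G.gen p) (Q x) = G.coordsL (edgeRow p e) x := by
  obtain ⟨s, t⟩ := e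
  induction s using Sym2.ind with
  | _ u v =>
    have hu : u ∈ G.verts := mem_verts_of_edge hG he u (by simp)
    have hv : v ∈ G.verts := mem_verts_of_edge hG he v (by simp)
    set Xu1 : MvPolynomial ({v // v ∈ G.verts} × Bool) ℚ := X (⟨⟨u, hu⟩, true⟩) with hXu1
    set Xu2 : MvPolynomial ({v // v ∈ G.verts} × Bool) ℚ := X (⟨⟨u, hu⟩, false⟩) with hXu2
    set Xv1 : MvPolynomial ({v // v ∈ G.verts} × Bool) ℚ := X (⟨⟨v, hv⟩, true⟩) with hXv1
    set Xv2 : MvPolynomial ({v // v ∈ G.verts} × Bool) ℚ := X (⟨⟨v, hv⟩, false⟩) with hXv2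
    refine ⟨fun x =>
      (if x.1.1 = u then
        (if x.2 then (if t then Xu2 - Xv2 else Xu1 - Xv1)
         else (if t then -(Xu1 - Xv1) else Xu2 - Xv2)) else 0) +
      (if x.1.1 = v then
        (if x.2 then (if t then Xv2 - Xu2 else Xv1 - Xu1)
         else (if t then -(Xv1 - Xu1) else Xv2 - Xu2)) else 0), ?_⟩
    intro p x
    have hd : ¬ (s(u, v) : Sym2 V).IsDiag := by
      rcases mem_edges_iff.1 he with ⟨_, hs⟩ | ⟨_, hs⟩
      · exact (hG.1 _ hs).1
      · exact (hG.2 _ hs).1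
    have huv : u ≠ v := by simpa [Sym2.isDiag_iff_proj_eq] using hd
    obtain ⟨⟨w, hw⟩, c⟩ := x
    have hgen1 : ∀ (z : V) (hz : z ∈ G.verts),
        (MvPolynomial.aeval (G.gen p)) (X (⟨⟨z, hz⟩, true⟩ :
          {v // v ∈ G.verts} × Bool) : MvPolynomial _ ℚ) = (p z).1 := by
      intro z hz; simp [gen]
    have hgen2 : ∀ (z : V) (hz : z ∈ G.verts),
        (MvPolynomial.aeval (G.gen p)) (X (⟨⟨z, hz⟩, false⟩ :
          {v // v ∈ G.verts} × Bool) : MvPolynomial _ ℚ) = (p z).2 := by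
      intro z hz; simp [gen]
    have hcL : ∀ f : V → ℝ × ℝ, G.coordsL f (⟨⟨w, hw⟩, c⟩) =
        if c then (f w).1 else (f w).2 := fun f => rfl
    rw [hcL, edgeRow_apply]
    by_cases hwu : w = u
    · subst hwu
      simp only [if_pos rfl, if_neg huv, map_add, map_sub, map_neg, map_zero,
        hXu1, hXu2, hXv1, hXv2, add_zero]
      by_cases hc : c <;> by_cases ht : t <;>
        simp [hc, ht, gen, dvec, Prod.ext_iff]
    · by_cases hwv : w = v
      · subst hwv
        simp only [if_pos rfl, if_neg hwu, map_add, map_sub, map_neg, map_zero,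
          hXu1, hXu2, hXv1, hXv2, zero_add]
        by_cases hc : c <;> by_cases ht : t <;>
          simp [hc, ht, gen, dvec, Prod.ext_iff]
      · simp only [if_neg hwu, if_neg hwv, map_zero, add_zero]
        by_cases hc : c <;> simp [hc]

end DLGraph

end Aux
section Transfer

open MvPolynomial

namespace DLGraph

variable {V : Type} [DecidableEq V]

set_option maxHeartbeats 1000000 in
/-- Linear independence of edge rows transfers between generic realisations. -/
lemma li_transfer {G : DLGraph V} (hG : G.WellFormed) {S : Finset (Sym2 V × Bool)}
    (hS : S ⊆ G.edges) {p q : V → ℝ × ℝ} (hp : G.Generic p) (hq : G.Generic q)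
    (h : LinearIndependent ℝ (fun e : {e // e ∈ S} => edgeRow p e.1)) :
    LinearIndependent ℝ (fun e : {e // e ∈ S} => edgeRow q e.1) := by
  rw [li_coords_iff hG hS] at h ⊢
  have hQ : ∀ e : {e // e ∈ S}, ∃ Q : ({v // v ∈ G.verts} × Bool) →
      MvPolynomial ({v // v ∈ G.verts} × Bool) ℚ,
      ∀ (p' : V → ℝ × ℝ) (x : {v // v ∈ G.verts} × Bool),
        MvPolynomial.aeval (G.gen p') (Q x) = G.coordsL (edgeRow p' e.1) x :=
    fun e => exists_polyRow hG (hS e.2)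
  choose Q hQs using hQ
  set fp : MvPolynomial ({v // v ∈ G.verts} × Bool) ℚ →+* ℝ :=
    (MvPolynomial.aeval (G.gen p)).toRingHom with hfp
  set fq : MvPolynomial ({v // v ∈ G.verts} × Bool) ℚ →+* ℝ :=
    (MvPolynomial.aeval (G.gen q)).toRingHom with hfq
  have hNp : (fun e : {e // e ∈ S} => G.coordsL (edgeRow p e.1))
      = fun e => fun x => fp (Q e x) := by
    funext e x; exact (hQs e p x).symm
  have hNq : (fun e : {e // e ∈ S} => G.coordsL (edgeRow q e.1))
      = fun e => fun x => fq (Q e x) := by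
    funext e x; exact (hQs e q x).symm
  rw [hNp] at h
  rw [hNq]
  have hgi : Function.Injective fq := fun a b hab => generic_inj hq hab
  exact linearIndependent_transfer Q fp fq hgi h

end DLGraph

end Transfer

section DepLayer

namespace DLGraph

variable {V : Type} [DecidableEq V]

/-- Dependence of a finite set of edge rows at a fixed realisation. -/
def dep0 (p0 : V → ℝ × ℝ) (S : Finset (Sym2 V × Bool)) : Prop :=
  ¬ LinearIndependent ℝ (fun e : {e // e ∈ S} => edgeRow p0 e.1)

/-- Minimal dependent sets. -/
def minDep (p0 : V → ℝ × ℝ) (C : Finset (Sym2 V × Bool)) : Prop :=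
  dep0 p0 C ∧ ∀ D ⊂ C, ¬ dep0 p0 D

lemma dep0_iff {p0 : V → ℝ × ℝ} {S : Finset (Sym2 V × Bool)} :
    dep0 p0 S ↔ ∃ c : Sym2 V × Bool → ℝ,
      (∀ e ∉ S, c e = 0) ∧ (∃ e ∈ S, c e ≠ 0) ∧
      ∑ e ∈ S, c e • edgeRow p0 e = 0 := by
  rw [dep0, Fintype.not_linearIndependent_iff]
  constructor
  · rintro ⟨g, hsum, i, hi⟩
    refine ⟨fun e => if h : e ∈ S then g ⟨e, h⟩ else 0, fun e he => dif_neg he,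
      ⟨i.1, i.2, by simp only [dif_pos i.2, Subtype.coe_eta]; exact hi⟩, ?_⟩
    rw [← hsum, ← Finset.sum_coe_sort S (fun e => (if h : e ∈ S then g ⟨e, h⟩ else 0) • edgeRow p0 e)]
    refine Finset.sum_congr rfl (fun x _ => ?_)
    simp only [dif_pos x.2, Subtype.coe_eta]
  · rintro ⟨c, hsupp, ⟨e0, he0, hce0⟩, hsum⟩
    refine ⟨fun i => c i.1, ?_, ⟨e0, he0⟩, hce0⟩
    rw [← Finset.sum_coe_sort S (fun e => c e • edgeRow p0 e)] at hsum
    exact hsum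

lemma dep0_mono {p0 : V → ℝ × ℝ} {S S' : Finset (Sym2 V × Bool)} (hss : S ⊆ S')
    (h : dep0 p0 S) : dep0 p0 S' := by
  rw [dep0_iff] at h ⊢
  obtain ⟨c, hsupp, hne, hsum⟩ := h
  refine ⟨c, fun e he => hsupp e (fun hc => he (hss hc)), ⟨hne.choose, hss hne.choose_spec.1,
    hne.choose_spec.2⟩, ?_⟩
  rw [← hsum]
  exact (Finset.sum_subset hss (fun x _ hx => by rw [hsupp x hx, zero_smul])).symm

lemma not_dep0_empty {p0 : V → ℝ × ℝ} : ¬ dep0 p0 (∅ : Finset (Sym2 V × Bool)) := by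
  rw [dep0_iff]
  rintro ⟨c, _, ⟨e, he, _⟩, _⟩
  exact absurd he (Finset.notMem_empty e)

lemma minDep_nonempty {p0 : V → ℝ × ℝ} {C : Finset (Sym2 V × Bool)}
    (h : minDep p0 C) : C.Nonempty := by
  rcases Finset.eq_empty_or_nonempty C with rfl | hne
  · exact absurd h.1 not_dep0_empty
  · exact hne

lemma minDep_subset_eq {p0 : V → ℝ × ℝ} {K S : Finset (Sym2 V × Bool)}
    (hK : minDep p0 K) (hS : dep0 p0 S) (hsub : S ⊆ K) : S = K := by
  by_contra hne
  exact hK.2 S (Finset.ssubset_iff_subset_ne.2 ⟨hsub, hne⟩) hS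

/-- A minimal dependent set has a dependency with full support. -/
lemma minDep_coeffs {p0 : V → ℝ × ℝ} {C : Finset (Sym2 V × Bool)} (h : minDep p0 C) :
    ∃ c : Sym2 V × Bool → ℝ, (∀ e ∉ C, c e = 0) ∧ (∀ e ∈ C, c e ≠ 0) ∧
      ∑ e ∈ C, c e • edgeRow p0 e = 0 := by
  obtain ⟨c, hsupp, hne, hsum⟩ := dep0_iff.1 h.1
  have hTC : C.filter (fun e => c e ≠ 0) = C := by
    refine minDep_subset_eq h ?_ (Finset.filter_subset _ _)
    rw [dep0_iff]
    refine ⟨c, ?_, ?_, ?_⟩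
    · intro e he
      by_cases hec : e ∈ C
      · by_contra hc0
        exact he (Finset.mem_filter.2 ⟨hec, hc0⟩)
      · exact hsupp e hec
    · obtain ⟨e, he, hc⟩ := hne
      exact ⟨e, Finset.mem_filter.2 ⟨he, hc⟩, hc⟩
    · rw [← hsum]
      refine Finset.sum_subset (Finset.filter_subset _ _) (fun x hx hnx => ?_)
      have : c x = 0 := by
        by_contra hc
        exact hnx (Finset.mem_filter.2 ⟨hx, hc⟩)
      rw [this, zero_smul]
  refine ⟨c, hsupp, fun e he => ?_, hsum⟩
  have := hTC ▸ he
  exact (Finset.mem_filter.1 this).2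

end DLGraph

end DepLayer
section MatroidLayer

namespace DLGraph

variable {V : Type} [DecidableEq V]

/-- `B` spans the row of `e0`. -/
def spans (p0 : V → ℝ × ℝ) (B : Finset (Sym2 V × Bool)) (e0 : Sym2 V × Bool) : Prop :=
  ∃ d : Sym2 V × Bool → ℝ, (∀ e ∉ B, d e = 0) ∧
    ∑ e ∈ B, d e • edgeRow p0 e = edgeRow p0 e0

lemma spans_erase {p0 : V → ℝ × ℝ} {B : Finset (Sym2 V × Bool)} {d : Sym2 V × Bool → ℝ}
    (hsupp : ∀ e ∉ B, d e = 0) (hsum : ∑ e ∈ B, d e • edgeRow p0 e = 0)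
    {b : Sym2 V × Bool} (hb : b ∈ B) (hdb : d b ≠ 0) : spans p0 (B.erase b) b := by
  refine ⟨fun e => if e = b then 0 else -(d b)⁻¹ * d e, ?_, ?_⟩
  · intro e he
    show (if e = b then (0:ℝ) else -(d b)⁻¹ * d e) = 0
    by_cases heb : e = b
    · simp [heb]
    · rw [if_neg heb]
      have heB : e ∉ B := fun hmem => he (Finset.mem_erase.2 ⟨heb, hmem⟩)
      rw [hsupp e heB, mul_zero]
  · show ∑ e ∈ B.erase b, (if e = b then (0:ℝ) else -(d b)⁻¹ * d e) • edgeRow p0 e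
        = edgeRow p0 b
    have hsplit : d b • edgeRow p0 b + ∑ e ∈ B.erase b, d e • edgeRow p0 e = 0 :=
      (Finset.add_sum_erase B (fun e => d e • edgeRow p0 e) hb).trans hsum
    have h1 : ∑ e ∈ B.erase b, (if e = b then 0 else -(d b)⁻¹ * d e) • edgeRow p0 e
        = ∑ e ∈ B.erase b, (-(d b)⁻¹ * d e) • edgeRow p0 e := by
      refine Finset.sum_congr rfl (fun e he => ?_)
      rw [if_neg (Finset.ne_of_mem_erase he)]
    have h2 : ∑ e ∈ B.erase b, (-(d b)⁻¹ * d e) • edgeRow p0 e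
        = (-(d b)⁻¹) • ∑ e ∈ B.erase b, d e • edgeRow p0 e := by
      rw [Finset.smul_sum]
      exact Finset.sum_congr rfl (fun e _ => (smul_smul _ _ _).symm)
    have h3 : ∑ e ∈ B.erase b, d e • edgeRow p0 e = -(d b • edgeRow p0 b) :=
      eq_neg_of_add_eq_zero_right hsplit
    rw [h1, h2, h3, smul_neg, neg_smul, neg_neg, smul_smul, inv_mul_cancel₀ hdb, one_smul]

lemma spans_trans {p0 : V → ℝ × ℝ} {B : Finset (Sym2 V × Bool)} {b e0 : Sym2 V × Bool}
    (hb : b ∈ B) (h1 : spans p0 (B.erase b) b) (h2 : spans p0 B e0) :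
    spans p0 (B.erase b) e0 := by
  obtain ⟨d1, hs1, hsum1⟩ := h1
  obtain ⟨d2, hs2, hsum2⟩ := h2
  refine ⟨fun e => (if e = b then 0 else d2 e) + d2 b * d1 e, ?_, ?_⟩
  · intro e he
    show (if e = b then (0:ℝ) else d2 e) + d2 b * d1 e = 0
    by_cases heb : e = b
    · rw [if_pos heb, zero_add, hs1 e he, mul_zero]
    · rw [if_neg heb]
      have heB : e ∉ B := fun hmem => he (Finset.mem_erase.2 ⟨heb, hmem⟩)
      rw [hs2 e heB, hs1 e he, mul_zero, add_zero]
  · show ∑ e ∈ B.erase b, ((if e = b then (0:ℝ) else d2 e) + d2 b * d1 e) • edgeRow p0 e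
        = edgeRow p0 e0
    have heq : ∑ e ∈ B.erase b, ((if e = b then (0:ℝ) else d2 e) + d2 b * d1 e) • edgeRow p0 e
        = ∑ e ∈ B.erase b, (d2 e • edgeRow p0 e + (d2 b) • (d1 e • edgeRow p0 e)) := by
      refine Finset.sum_congr rfl (fun e he => ?_)
      rw [if_neg (Finset.ne_of_mem_erase he), add_smul, mul_smul]
    rw [heq, Finset.sum_add_distrib, ← Finset.smul_sum, hsum1]
    have hsplit : d2 b • edgeRow p0 b + ∑ e ∈ B.erase b, d2 e • edgeRow p0 e
        = edgeRow p0 e0 :=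
      (Finset.add_sum_erase B (fun e => d2 e • edgeRow p0 e) hb).trans hsum2
    have : ∑ e ∈ B.erase b, d2 e • edgeRow p0 e
        = edgeRow p0 e0 - d2 b • edgeRow p0 b := by
      rw [← hsplit]; abel
    rw [this]; abel

lemma dep0_insert_of_spans {p0 : V → ℝ × ℝ} {B : Finset (Sym2 V × Bool)}
    {e0 : Sym2 V × Bool} (he0B : e0 ∉ B) (h : spans p0 B e0) :
    dep0 p0 (insert e0 B) := by
  obtain ⟨d, hsupp, hsum⟩ := h
  rw [dep0_iff]
  refine ⟨fun e => if e = e0 then -1 else d e, ?_,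
    ⟨e0, Finset.mem_insert_self _ _, by
      show (if e0 = e0 then (-1:ℝ) else d e0) ≠ 0
      rw [if_pos rfl]; norm_num⟩, ?_⟩
  · intro e he
    show (if e = e0 then (-1:ℝ) else d e) = 0
    have hne : e ≠ e0 := fun hEq => he (hEq ▸ Finset.mem_insert_self _ _)
    rw [if_neg hne]
    exact hsupp e (fun hmem => he (Finset.mem_insert_of_mem hmem))
  · show ∑ e ∈ insert e0 B, (if e = e0 then (-1:ℝ) else d e) • edgeRow p0 e = 0
    rw [Finset.sum_insert he0B, if_pos rfl]
    have heq : ∑ e ∈ B, (if e = e0 then (-1:ℝ) else d e) • edgeRow p0 e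
        = ∑ e ∈ B, d e • edgeRow p0 e := by
      refine Finset.sum_congr rfl (fun e he => ?_)
      rw [if_neg (by rintro rfl; exact he0B he)]
    rw [heq, hsum, neg_one_smul, neg_add_cancel]

/-- Every dependency yields a minimal dependent set through any element of its support. -/
lemma exists_minDep {p0 : V → ℝ × ℝ} {S : Finset (Sym2 V × Bool)} {c : Sym2 V × Bool → ℝ}
    (hsupp : ∀ e ∉ S, c e = 0) (hsum : ∑ e ∈ S, c e • edgeRow p0 e = 0)
    {e0 : Sym2 V × Bool} (he0 : e0 ∈ S) (hc0 : c e0 ≠ 0) :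
    ∃ K, minDep p0 K ∧ e0 ∈ K ∧ K ⊆ S.filter (fun e => c e ≠ 0) := by
  classical
  set T := S.filter (fun e => c e ≠ 0) with hT
  have he0T : e0 ∈ T := Finset.mem_filter.2 ⟨he0, hc0⟩
  have hsuppT : ∀ e ∉ T, c e = 0 := by
    intro e he
    by_cases heS : e ∈ S
    · by_contra hc
      exact he (Finset.mem_filter.2 ⟨heS, hc⟩)
    · exact hsupp e heS
  have hTsum : ∑ e ∈ T, c e • edgeRow p0 e = 0 := by
    rw [← hsum]
    refine Finset.sum_subset (Finset.filter_subset _ _) (fun x hx hnx => ?_)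
    rw [hsuppT x hnx, zero_smul]
  have hstart : spans p0 (T.erase e0) e0 := spans_erase hsuppT hTsum he0T hc0
  obtain ⟨B, hBmem, hBmin⟩ := Finset.exists_min_image
    (((T.erase e0).powerset).filter (fun B => spans p0 B e0)) Finset.card
    ⟨T.erase e0, Finset.mem_filter.2 ⟨Finset.mem_powerset.2 (Finset.Subset.refl _), hstart⟩⟩
  have hBsub : B ⊆ T.erase e0 := Finset.mem_powerset.1 (Finset.mem_filter.1 hBmem).1
  have hBspan : spans p0 B e0 := (Finset.mem_filter.1 hBmem).2
  have he0B : e0 ∉ B := fun h => (Finset.mem_erase.1 (hBsub h)).1 rfl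
  have hmin : ∀ B' ⊆ T.erase e0, spans p0 B' e0 → B.card ≤ B'.card := fun B' hsub' hsp =>
    hBmin B' (Finset.mem_filter.2 ⟨Finset.mem_powerset.2 hsub', hsp⟩)
  have hBindep : ¬ dep0 p0 B := by
    intro hdep
    obtain ⟨d, hsuppd, ⟨b, hbB, hdb⟩, hsumd⟩ := dep0_iff.1 hdep
    have h1 : spans p0 (B.erase b) b := spans_erase hsuppd hsumd hbB hdb
    have h2 : spans p0 (B.erase b) e0 := spans_trans hbB h1 hBspan
    have hle := hmin (B.erase b) ((Finset.erase_subset _ _).trans hBsub) h2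
    have hlt := Finset.card_erase_lt_of_mem hbB
    omega
  have hbindep : ∀ b ∈ B, ¬ dep0 p0 (insert e0 (B.erase b)) := by
    intro b hbB hdep
    obtain ⟨d, hsuppd, ⟨x, hx, hdx⟩, hsumd⟩ := dep0_iff.1 hdep
    have hbne0 : b ≠ e0 := fun hEq => he0B (hEq ▸ hbB)
    have he0nB : e0 ∉ B.erase b := fun h => he0B (Finset.mem_of_mem_erase h)
    by_cases hde0 : d e0 = 0
    · apply hBindep
      rw [dep0_iff]
      have hxB : x ∈ B.erase b := by
        rcases Finset.mem_insert.1 hx with rfl | h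
        · exact absurd hde0 hdx
        · exact h
      refine ⟨fun e => if e = e0 then 0 else d e, ?_, ⟨x, Finset.mem_of_mem_erase hxB, ?_⟩, ?_⟩
      · intro e he
        show (if e = e0 then (0:ℝ) else d e) = 0
        by_cases hee0 : e = e0
        · rw [if_pos hee0]
        · rw [if_neg hee0]
          refine hsuppd e (fun hmem => ?_)
          rcases Finset.mem_insert.1 hmem with h | h
          · exact hee0 h
          · exact he (Finset.mem_of_mem_erase h)
      · show (if x = e0 then (0:ℝ) else d x) ≠ 0
        rw [if_neg (by rintro rfl; exact he0B (Finset.mem_of_mem_erase hxB))]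
        exact hdx
      · show ∑ e ∈ B, (if e = e0 then (0:ℝ) else d e) • edgeRow p0 e = 0
        have heq : ∑ e ∈ B, (if e = e0 then (0:ℝ) else d e) • edgeRow p0 e
            = ∑ e ∈ B, d e • edgeRow p0 e := by
          refine Finset.sum_congr rfl (fun e he => ?_)
          rw [if_neg (by rintro rfl; exact he0B he)]
        rw [heq]
        have hdrop : ∑ e ∈ B, d e • edgeRow p0 e = ∑ e ∈ B.erase b, d e • edgeRow p0 e := by
          refine (Finset.sum_subset (Finset.erase_subset _ _) (fun x' hx' hnx' => ?_)).symm
          have hxb : x' = b := by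
            by_contra hne
            exact hnx' (Finset.mem_erase.2 ⟨hne, hx'⟩)
          subst hxb
          have : d x' = 0 := hsuppd x' (by
            intro hmem
            rcases Finset.mem_insert.1 hmem with h | h
            · exact hbne0 h
            · exact (Finset.mem_erase.1 h).1 rfl)
          rw [this, zero_smul]
        rw [hdrop, ← hsumd]
        rw [Finset.sum_insert he0nB, hde0, zero_smul, zero_add]
    · have h1 : spans p0 ((insert e0 (B.erase b)).erase e0) e0 :=
        spans_erase hsuppd hsumd (Finset.mem_insert_self _ _) hde0
      rw [Finset.erase_insert he0nB] at h1
      have hle := hmin (B.erase b) ((Finset.erase_subset _ _).trans hBsub) h1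
      have hlt := Finset.card_erase_lt_of_mem hbB
      omega
  refine ⟨insert e0 B, ⟨dep0_insert_of_spans he0B hBspan, ?_⟩,
    Finset.mem_insert_self _ _, ?_⟩
  · intro D hD hdepD
    by_cases he0D : e0 ∈ D
    · obtain ⟨b, hbK, hbD⟩ := Finset.exists_of_ssubset hD
      have hbB : b ∈ B := by
        rcases Finset.mem_insert.1 hbK with rfl | h
        · exact absurd he0D hbD
        · exact h
      apply hbindep b hbB
      refine dep0_mono (fun x hxD => ?_) hdepD
      rcases Finset.mem_insert.1 (hD.1 hxD) with rfl | h
      · exact Finset.mem_insert_self _ _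
      · refine Finset.mem_insert_of_mem (Finset.mem_erase.2 ⟨?_, h⟩)
        rintro rfl
        exact hbD hxD
    · apply hBindep
      refine dep0_mono (fun x hxD => ?_) hdepD
      rcases Finset.mem_insert.1 (hD.1 hxD) with rfl | h
      · exact absurd hxD he0D
      · exact h
  · intro x hx
    rcases Finset.mem_insert.1 hx with rfl | h
    · exact he0T
    · exact Finset.mem_of_mem_erase (hBsub h)

/-- Strong circuit elimination. -/
lemma strong_elim {p0 : V → ℝ × ℝ} {C1 C2 : Finset (Sym2 V × Bool)}
    (h1 : minDep p0 C1) (h2 : minDep p0 C2) {f e : Sym2 V × Bool}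
    (hf1 : f ∈ C1) (hf2 : f ∈ C2) (he1 : e ∈ C1) (he2 : e ∉ C2) :
    ∃ K, minDep p0 K ∧ e ∈ K ∧ K ⊆ (C1 ∪ C2).erase f := by
  obtain ⟨c1, hs1, hnz1, hsum1⟩ := minDep_coeffs h1
  obtain ⟨c2, hs2, hnz2, hsum2⟩ := minDep_coeffs h2
  set ν : Sym2 V × Bool → ℝ := fun x => c2 f * c1 x - c1 f * c2 x with hν
  have hsupp : ∀ x ∉ (C1 ∪ C2).erase f, ν x = 0 := by
    intro x hx
    by_cases hxf : x = f
    · subst hxf; simp [hν, mul_comm]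
    · have hxU : x ∉ C1 ∪ C2 := fun h => hx (Finset.mem_erase.2 ⟨hxf, h⟩)
      have hx1 : x ∉ C1 := fun h => hxU (Finset.mem_union_left _ h)
      have hx2 : x ∉ C2 := fun h => hxU (Finset.mem_union_right _ h)
      simp [hν, hs1 x hx1, hs2 x hx2]
  have hsum : ∑ x ∈ (C1 ∪ C2).erase f, ν x • edgeRow p0 x = 0 := by
    have hf0 : ν f • edgeRow p0 f = 0 := by
      have : ν f = 0 := by simp [hν, mul_comm]
      rw [this, zero_smul]
    have hdrop : ∑ x ∈ (C1 ∪ C2).erase f, ν x • edgeRow p0 x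
        = ∑ x ∈ C1 ∪ C2, ν x • edgeRow p0 x :=
      Finset.sum_erase (C1 ∪ C2) (f := fun x => ν x • edgeRow p0 x) hf0
    rw [hdrop]
    have hsplit : ∀ x, ν x • edgeRow p0 x
        = (c2 f) • (c1 x • edgeRow p0 x) - (c1 f) • (c2 x • edgeRow p0 x) := by
      intro x
      rw [hν]
      rw [sub_smul, mul_smul, mul_smul]
    calc ∑ x ∈ C1 ∪ C2, ν x • edgeRow p0 x
        = ∑ x ∈ C1 ∪ C2, ((c2 f) • (c1 x • edgeRow p0 x)
            - (c1 f) • (c2 x • edgeRow p0 x)) :=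
          Finset.sum_congr rfl (fun x _ => hsplit x)
      _ = (c2 f) • (∑ x ∈ C1 ∪ C2, c1 x • edgeRow p0 x)
            - (c1 f) • (∑ x ∈ C1 ∪ C2, c2 x • edgeRow p0 x) := by
          rw [Finset.sum_sub_distrib, Finset.smul_sum, Finset.smul_sum]
      _ = (c2 f) • (∑ x ∈ C1, c1 x • edgeRow p0 x)
            - (c1 f) • (∑ x ∈ C2, c2 x • edgeRow p0 x) := by
          congr 1
          · congr 1
            refine (Finset.sum_subset Finset.subset_union_left
              (fun x _ hx => by rw [hs1 x hx, zero_smul])).symm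
          · congr 1
            refine (Finset.sum_subset Finset.subset_union_right
              (fun x _ hx => by rw [hs2 x hx, zero_smul])).symm
      _ = 0 := by rw [hsum1, hsum2, smul_zero, smul_zero, sub_zero]
  have hef : e ≠ f := fun hEq => he2 (hEq ▸ hf2)
  have heE : e ∈ (C1 ∪ C2).erase f :=
    Finset.mem_erase.2 ⟨hef, Finset.mem_union_left _ he1⟩
  have hνe : ν e ≠ 0 := by
    rw [hν]
    simp only [hs2 e he2, mul_zero, sub_zero]
    exact mul_ne_zero (hnz2 f hf2) (hnz1 e he1)
  obtain ⟨K, hK, heK, hKsub⟩ := exists_minDep hsupp hsum heE hνe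
  exact ⟨K, hK, heK, hKsub.trans (Finset.filter_subset _ _)⟩

/-- Circuits are exactly the minimal dependent subsets of the edge set. -/
lemma isCircuit_iff {G : DLGraph V} (hG : G.WellFormed) {p0 : V → ℝ × ℝ}
    (hp0 : G.Generic p0) {C : Finset (Sym2 V × Bool)} :
    G.IsCircuit C ↔ C ⊆ G.edges ∧ minDep p0 C := by
  constructor
  · rintro ⟨hsub, hdep, hmin⟩
    refine ⟨hsub, ?_, fun D hD hdepD => hdepD ((hmin D hD) p0 hp0)⟩
    rw [Indep] at hdep
    push_neg at hdep
    obtain ⟨p, hp, hnli⟩ := hdep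
    intro hli
    exact hnli (li_transfer hG hsub hp0 hp hli)
  · rintro ⟨hsub, hdep, hmin⟩
    refine ⟨hsub, fun hInd => hdep (hInd p0 hp0), fun D hD p hp => ?_⟩
    have hnd : ¬ dep0 p0 D := hmin D hD
    have hDsub : D ⊆ G.edges := hD.subset.trans hsub
    exact li_transfer hG hDsub hp0 hp (not_not.1 hnd)

/-- Transitivity: two circuits sharing an element connect their elements. -/
lemma conn_trans {p0 : V → ℝ × ℝ} : ∀ (n : ℕ) (C1 C2 : Finset (Sym2 V × Bool))
    (e f g : Sym2 V × Bool), (C1 ∪ C2).card ≤ n → minDep p0 C1 → minDep p0 C2 →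
    e ∈ C1 → f ∈ C1 → f ∈ C2 → g ∈ C2 →
    ∃ K, minDep p0 K ∧ K ⊆ C1 ∪ C2 ∧ e ∈ K ∧ g ∈ K := by
  intro n
  induction n with
  | zero =>
    intro C1 C2 e f g hcard _ _ he _ _ _
    have : C1 ∪ C2 = ∅ := Finset.card_eq_zero.1 (Nat.le_zero.1 hcard)
    exact absurd (this ▸ Finset.mem_union_left C2 he) (Finset.notMem_empty e)
  | succ n ih =>
    intro C1 C2 e f g hcard h1 h2 he hf1 hf2 hg
    by_cases hgC1 : g ∈ C1
    · exact ⟨C1, h1, Finset.subset_union_left, he, hgC1⟩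
    by_cases heC2 : e ∈ C2
    · exact ⟨C2, h2, Finset.subset_union_right, heC2, hg⟩
    obtain ⟨C3, h3, heC3, hC3sub⟩ := strong_elim h1 h2 hf1 hf2 he heC2
    have hC3sub' : C3 ⊆ C1 ∪ C2 := hC3sub.trans (Finset.erase_subset _ _)
    have hfC3 : f ∉ C3 := fun h => (Finset.mem_erase.1 (hC3sub h)).1 rfl
    by_cases hgC3 : g ∈ C3
    · exact ⟨C3, h3, hC3sub', heC3, hgC3⟩
    have hex : ∃ h', h' ∈ C3 ∧ h' ∉ C1 := by
      by_contra hno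
      push_neg at hno
      have hsub : C3 ⊆ C1 := fun x hx => hno x hx
      have : C3 = C1 := minDep_subset_eq h1 h3.1 hsub
      exact hfC3 (this ▸ hf1)
    obtain ⟨h', hh'C3, hh'C1⟩ := hex
    have hh'C2 : h' ∈ C2 := (Finset.mem_union.1 (hC3sub' hh'C3)).resolve_left hh'C1
    obtain ⟨C4, h4, hgC4, hC4sub⟩ := strong_elim h2 h3 hh'C2 hh'C3 hg hgC3
    have hC4sub' : C4 ⊆ C1 ∪ C2 := by
      refine (hC4sub.trans (Finset.erase_subset _ _)).trans ?_
      exact Finset.union_subset Finset.subset_union_right hC3sub'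
    have hh'C4 : h' ∉ C4 := fun h => (Finset.mem_erase.1 (hC4sub h)).1 rfl
    by_cases heC4 : e ∈ C4
    · exact ⟨C4, h4, hC4sub', heC4, hgC4⟩
    have hx0 : ∃ x0, x0 ∈ C1 ∧ x0 ∈ C4 := by
      by_contra hno
      push_neg at hno
      have hC4C2 : C4 ⊆ C2 := by
        intro x hx
        have hxU : x ∈ C2 ∪ C3 := (hC4sub.trans (Finset.erase_subset _ _)) hx
        rcases Finset.mem_union.1 hxU with h | h
        · exact h
        · rcases Finset.mem_union.1 (hC3sub' h) with h' | h'
          · exact absurd hx (hno x h')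
          · exact h'
      have : C4 = C2 := minDep_subset_eq h2 h4.1 hC4C2
      exact hh'C4 (this ▸ hh'C2)
    obtain ⟨x0, hx0C1, hx0C4⟩ := hx0
    have hstrict : (C1 ∪ C4).card ≤ n := by
      have hsub : C1 ∪ C4 ⊆ C1 ∪ C2 :=
        Finset.union_subset Finset.subset_union_left hC4sub'
      have hh'notin : h' ∉ C1 ∪ C4 := by
        rw [Finset.mem_union]
        rintro (h | h)
        · exact hh'C1 h
        · exact hh'C4 h
      have hh'in : h' ∈ C1 ∪ C2 := Finset.mem_union_right _ hh'C2
      have hlt : (C1 ∪ C4).card < (C1 ∪ C2).card := by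
        refine Finset.card_lt_card ⟨hsub, fun hcontra => hh'notin (hcontra hh'in)⟩
      omega
    obtain ⟨K, hK, hKsub, heK, hgK⟩ := ih C1 C4 e x0 g hstrict h1 h4 he hx0C1 hx0C4 hgC4
    exact ⟨K, hK, hKsub.trans (Finset.union_subset Finset.subset_union_left hC4sub'),
      heK, hgK⟩

end DLGraph

end MatroidLayer
section Construction

namespace DLGraph

variable {V : Type} [DecidableEq V]

/-- A circuit of the rigidity matroid, in the `p0`-linear-algebra formulation. -/
def circ (G : DLGraph V) (p0 : V → ℝ × ℝ) (C : Finset (Sym2 V × Bool)) : Prop :=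
  C ⊆ G.edges ∧ minDep p0 C

/-- Every pair of elements of `PU` lies on a common circuit inside `PU`. -/
def connSet (G : DLGraph V) (p0 : V → ℝ × ℝ) (PU : Finset (Sym2 V × Bool)) : Prop :=
  ∀ a ∈ PU, ∀ b ∈ PU, ∃ K, G.circ p0 K ∧ K ⊆ PU ∧ a ∈ K ∧ b ∈ K

lemma circ_trans {G : DLGraph V} {p0 : V → ℝ × ℝ} {C1 C2 : Finset (Sym2 V × Bool)}
    {e f g : Sym2 V × Bool} (h1 : G.circ p0 C1) (h2 : G.circ p0 C2)
    (he : e ∈ C1) (hf1 : f ∈ C1) (hf2 : f ∈ C2) (hg : g ∈ C2) :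
    ∃ K, G.circ p0 K ∧ K ⊆ C1 ∪ C2 ∧ e ∈ K ∧ g ∈ K := by
  obtain ⟨K, hK, hsub, heK, hgK⟩ :=
    conn_trans (C1 ∪ C2).card C1 C2 e f g le_rfl h1.2 h2.2 he hf1 hf2 hg
  exact ⟨K, ⟨hsub.trans (Finset.union_subset h1.1 h2.1), hK⟩, hsub, heK, hgK⟩

lemma conn_extend {G : DLGraph V} {p0 : V → ℝ × ℝ} {PU K : Finset (Sym2 V × Bool)}
    (hPU : G.connSet p0 PU) (hK : G.circ p0 K) (hKPU : (K ∩ PU).Nonempty) :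
    G.connSet p0 (PU ∪ K) := by
  obtain ⟨x0, hx0⟩ := hKPU
  have hx0K : x0 ∈ K := (Finset.mem_inter.1 hx0).1
  have hx0PU : x0 ∈ PU := (Finset.mem_inter.1 hx0).2
  intro a ha b hb
  rcases Finset.mem_union.1 ha with haP | haK <;> rcases Finset.mem_union.1 hb with hbP | hbK
  · obtain ⟨K', h⟩ := hPU a haP b hbP
    exact ⟨K', h.1, h.2.1.trans Finset.subset_union_left, h.2.2⟩
  · obtain ⟨K1, hK1, hK1sub, haK1, hx0K1⟩ := hPU a haP x0 hx0PU
    obtain ⟨K2, hK2c, hK2sub, haK2, hbK2⟩ := circ_trans hK1 hK haK1 hx0K1 hx0K hbK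
    exact ⟨K2, hK2c, hK2sub.trans (Finset.union_subset
      (hK1sub.trans Finset.subset_union_left) Finset.subset_union_right), haK2, hbK2⟩
  · obtain ⟨K1, hK1, hK1sub, hbK1, hx0K1⟩ := hPU b hbP x0 hx0PU
    obtain ⟨K2, hK2c, hK2sub, haK2, hbK2⟩ := circ_trans hK hK1 haK hx0K hx0K1 hbK1
    exact ⟨K2, hK2c, hK2sub.trans (Finset.union_subset Finset.subset_union_right
      (hK1sub.trans Finset.subset_union_left)), haK2, hbK2⟩
  · exact ⟨K, hK, Finset.subset_union_right, haK, hbK⟩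

lemma mixed_mono {S S' : Finset (Sym2 V × Bool)} (h : S ⊆ S') (hm : MixedEdgeSet S) :
    MixedEdgeSet S' :=
  ⟨⟨hm.1.choose, h hm.1.choose_spec.1, hm.1.choose_spec.2⟩,
   ⟨hm.2.choose, h hm.2.choose_spec.1, hm.2.choose_spec.2⟩⟩

/-- The key step: a mixed circuit forming a legal ear. -/
lemma step_lemma {G : DLGraph V} (hG : G.WellFormed) {p0 : V → ℝ × ℝ}
    (hp0 : G.Generic p0) (hMC : G.MConnected) {PU : Finset (Sym2 V × Bool)}
    (hPUsub : PU ⊆ G.edges) (hmixPU : MixedEdgeSet PU) (hconn : G.connSet p0 PU)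
    (hne : PU ≠ G.edges) :
    ∃ Kc, G.circ p0 Kc ∧ MixedEdgeSet Kc ∧ (Kc ∩ PU).Nonempty ∧ (Kc \ PU).Nonempty ∧
      ∀ C', G.IsCircuit C' → (C' ∩ PU).Nonempty → (C' \ PU).Nonempty →
        ¬ (C' \ PU ⊂ Kc \ PU) := by
  classical
  have hss : PU ⊂ G.edges := Finset.ssubset_iff_subset_ne.2 ⟨hPUsub, hne⟩
  obtain ⟨f0, hf0e, hf0PU⟩ := Finset.exists_of_ssubset hss
  obtain ⟨⟨ed, hed, hedt⟩, ⟨el, hel, helt⟩⟩ := hmixPU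
  -- hub of the opposite type
  set h0 : Sym2 V × Bool := if f0.2 then el else ed with hh0
  have hh0PU : h0 ∈ PU := by
    by_cases h : f0.2 <;> simp only [hh0, h, if_true, if_false] <;> assumption
  have hfh0 : f0 ≠ h0 := fun hEq => hf0PU (hEq ▸ hh0PU)
  obtain ⟨M, hMcirc, hf0M, hh0M⟩ := hMC.2 f0 hf0e h0 (hPUsub hh0PU) hfh0
  have hM : G.circ p0 M := by
    have := (isCircuit_iff hG hp0).1 hMcirc
    exact ⟨this.1, this.2⟩
  -- choose minimal difference below M
  have aux : ∀ (k : ℕ) (C : Finset (Sym2 V × Bool)), G.circ p0 C → (C ∩ PU).Nonempty →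
      (C \ PU).Nonempty → (C \ PU).card ≤ k →
      ∃ Cm, G.circ p0 Cm ∧ (Cm ∩ PU).Nonempty ∧ (Cm \ PU).Nonempty ∧
        Cm \ PU ⊆ C \ PU ∧
        ∀ C', G.IsCircuit C' → (C' ∩ PU).Nonempty → (C' \ PU).Nonempty →
          ¬ (C' \ PU ⊂ Cm \ PU) := by
    intro k
    induction k with
    | zero =>
      intro C _ _ hne2 hcard
      have := Finset.card_pos.2 hne2
      omega
    | succ k ih =>
      intro C hC hCi hCd hcard
      by_cases hviol : ∃ C', G.IsCircuit C' ∧ (C' ∩ PU).Nonempty ∧ (C' \ PU).Nonempty ∧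
          (C' \ PU ⊂ C \ PU)
      · obtain ⟨C', h1, h2, h3, h4⟩ := hviol
        have hc' : G.circ p0 C' := by
          have := (isCircuit_iff hG hp0).1 h1
          exact ⟨this.1, this.2⟩
        have hlt := Finset.card_lt_card h4
        obtain ⟨Cm, hc, h5, h6, h7, h8⟩ := ih C' hc' h2 h3 (by omega)
        exact ⟨Cm, hc, h5, h6, h7.trans h4.subset, h8⟩
      · refine ⟨C, hC, hCi, hCd, Finset.Subset.refl _, ?_⟩
        intro C' h1 h2 h3 h4
        exact hviol ⟨C', h1, h2, h3, h4⟩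
  obtain ⟨Cm, hCm, hCmi, hCmd, hCmsub, hCmmin⟩ := aux (M \ PU).card M hM
    ⟨h0, Finset.mem_inter.2 ⟨hh0M, hh0PU⟩⟩
    ⟨f0, Finset.mem_sdiff.2 ⟨hf0M, hf0PU⟩⟩ le_rfl
  by_cases hmixCm : MixedEdgeSet Cm
  · exact ⟨Cm, hCm, hmixCm, hCmi, hCmd, hCmmin⟩
  · -- Cm is pure; all its edges have one type τ
    have hpure : ∃ τ : Bool, ∀ e ∈ Cm, e.2 = τ := by
      rcases not_and_or.1 hmixCm with h | h
      · push_neg at h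
        exact ⟨false, fun e he => by
          have := h e he
          exact Bool.not_eq_true _ ▸ (by simpa using this)⟩
      · push_neg at h
        exact ⟨true, fun e he => by
          have := h e he
          simpa using this⟩
    obtain ⟨τ, hτ⟩ := hpure
    obtain ⟨fs, hfs⟩ := hCmd
    have hfsCm : fs ∈ Cm := (Finset.mem_sdiff.1 hfs).1
    have hfsPU : fs ∉ PU := (Finset.mem_sdiff.1 hfs).2
    obtain ⟨x, hx⟩ := hCmi
    have hxCm : x ∈ Cm := (Finset.mem_inter.1 hx).1
    have hxPU : x ∈ PU := (Finset.mem_inter.1 hx).2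
    -- an edge of the opposite type in PU
    set ls : Sym2 V × Bool := if τ then el else ed with hls
    have hlsPU : ls ∈ PU := by
      by_cases h : τ <;> simp only [hls, h, if_true, if_false] <;> assumption
    have hlst : ls.2 = !τ := by
      cases τ
      · simpa [hls] using hedt
      · simpa [hls] using helt
    obtain ⟨K1, hK1, hK1sub, hxK1, hlsK1⟩ := hconn x hxPU ls hlsPU
    obtain ⟨K, hKc, hKsub, hfsK, hlsK⟩ := circ_trans hCm hK1 hfsCm hxCm hxK1 hlsK1
    have hKd : K \ PU ⊆ Cm \ PU := by
      intro y hy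
      have hyK : y ∈ K := (Finset.mem_sdiff.1 hy).1
      have hyPU : y ∉ PU := (Finset.mem_sdiff.1 hy).2
      rcases Finset.mem_union.1 (hKsub hyK) with h | h
      · exact Finset.mem_sdiff.2 ⟨h, hyPU⟩
      · exact absurd (hK1sub h) hyPU
    refine ⟨K, hKc, ?_, ⟨ls, Finset.mem_inter.2 ⟨hlsK, hlsPU⟩⟩,
      ⟨fs, Finset.mem_sdiff.2 ⟨hfsK, hfsPU⟩⟩, ?_⟩
    · -- K is mixed: fs has type τ, ls has type !τ
      have hfst : fs.2 = τ := hτ fs hfsCm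
      cases τ
      · exact ⟨⟨ls, hlsK, by rw [hlst]; rfl⟩, ⟨fs, hfsK, hfst⟩⟩
      · exact ⟨⟨fs, hfsK, hfst⟩, ⟨ls, hlsK, by rw [hlst]; rfl⟩⟩
    · intro C' h1 h2 h3 h4
      exact hCmmin C' h1 h2 h3 (Finset.ssubset_of_ssubset_of_subset h4 hKd)

end DLGraph

end Construction
section Assembly

namespace DLGraph

variable {V : Type} [DecidableEq V]

/-- A legal chain of ears starting from the union `PU`. -/
def chainP (G : DLGraph V) : Finset (Sym2 V × Bool) → List (Finset (Sym2 V × Bool)) → Prop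
  | PU, [] => PU = G.edges
  | PU, K :: L => G.IsCircuit K ∧ MixedEdgeSet K ∧ (K ∩ PU).Nonempty ∧ (K \ PU).Nonempty ∧
      (∀ C', G.IsCircuit C' → (C' ∩ PU).Nonempty → (C' \ PU).Nonempty →
        ¬ (C' \ PU ⊂ K \ PU)) ∧ chainP G (PU ∪ K) L

lemma exists_chain {G : DLGraph V} (hG : G.WellFormed) {p0 : V → ℝ × ℝ}
    (hp0 : G.Generic p0) (hMC : G.MConnected) :
    ∀ (n : ℕ) (PU : Finset (Sym2 V × Bool)), PU ⊆ G.edges → MixedEdgeSet PU →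
      G.connSet p0 PU → (G.edges \ PU).card ≤ n → ∃ L, G.chainP PU L := by
  intro n
  induction n with
  | zero =>
    intro PU h1 _ _ hcard
    have hempty : G.edges \ PU = ∅ := Finset.card_eq_zero.1 (Nat.le_zero.1 hcard)
    have hsub : G.edges ⊆ PU := by
      intro x hx
      by_contra hxPU
      have : x ∈ G.edges \ PU := Finset.mem_sdiff.2 ⟨hx, hxPU⟩
      rw [hempty] at this
      exact Finset.notMem_empty x this
    exact ⟨[], Finset.Subset.antisymm h1 hsub⟩
  | succ n ih =>
    intro PU h1 h2 h3 hcard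
    by_cases heq : PU = G.edges
    · exact ⟨[], heq⟩
    · obtain ⟨Kc, hKc, hKmix, hKi, hKd, hKE3⟩ := step_lemma hG hp0 hMC h1 h2 h3 heq
      have hKcirc : G.IsCircuit Kc := (isCircuit_iff hG hp0).2 ⟨hKc.1, hKc.2⟩
      have h1' : PU ∪ Kc ⊆ G.edges := Finset.union_subset h1 hKc.1
      have h2' : MixedEdgeSet (PU ∪ Kc) := mixed_mono Finset.subset_union_left h2
      have h3' : G.connSet p0 (PU ∪ Kc) := conn_extend h3 hKc hKi
      have hcard' : (G.edges \ (PU ∪ Kc)).card ≤ n := by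
        obtain ⟨x, hx⟩ := hKd
        have hxK : x ∈ Kc := (Finset.mem_sdiff.1 hx).1
        have hxPU : x ∉ PU := (Finset.mem_sdiff.1 hx).2
        have hssd : G.edges \ (PU ∪ Kc) ⊂ G.edges \ PU := by
          refine ⟨Finset.sdiff_subset_sdiff (Finset.Subset.refl _)
            Finset.subset_union_left, ?_⟩
          intro hcontra
          have hxin : x ∈ G.edges \ PU := Finset.mem_sdiff.2 ⟨hKc.1 hxK, hxPU⟩
          have := hcontra hxin
          exact (Finset.mem_sdiff.1 this).2 (Finset.mem_union_right _ hxK)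
        have := Finset.card_lt_card hssd
        omega
      obtain ⟨L, hL⟩ := ih (PU ∪ Kc) h1' h2' h3' hcard'
      exact ⟨Kc :: L, hKcirc, hKmix, hKi, hKd, hKE3, hL⟩

/-- Accumulated unions along a list. -/
def accU (PU : Finset (Sym2 V × Bool)) :
    List (Finset (Sym2 V × Bool)) → ℕ → Finset (Sym2 V × Bool)
  | _, 0 => PU
  | [], _ + 1 => PU
  | K :: L, i + 1 => accU (PU ∪ K) L i

lemma chain_final {G : DLGraph V} :
    ∀ (L : List (Finset (Sym2 V × Bool))) (PU), G.chainP PU L →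
      accU PU L L.length = G.edges := by
  intro L
  induction L with
  | nil => intro PU h; exact h
  | cons K L ih =>
    intro PU h
    exact ih (PU ∪ K) h.2.2.2.2.2

lemma chain_all {G : DLGraph V} :
    ∀ (L : List (Finset (Sym2 V × Bool))) (PU), G.chainP PU L →
      ∀ K ∈ L, G.IsCircuit K ∧ MixedEdgeSet K := by
  intro L
  induction L with
  | nil => intro PU _ K hK; exact absurd hK List.not_mem_nil
  | cons K' L ih =>
    intro PU h K hK
    rcases List.mem_cons.1 hK with rfl | hK'
    · exact ⟨h.1, h.2.1⟩
    · exact ih (PU ∪ K') h.2.2.2.2.2 K hK'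

lemma chain_at {G : DLGraph V} :
    ∀ (L : List (Finset (Sym2 V × Bool))) (PU), G.chainP PU L →
      ∀ (i : ℕ) (hi : i < L.length),
        ((L.get ⟨i, hi⟩) ∩ accU PU L i).Nonempty ∧
        ((L.get ⟨i, hi⟩) \ accU PU L i).Nonempty ∧
        ∀ C', G.IsCircuit C' → (C' ∩ accU PU L i).Nonempty →
          (C' \ accU PU L i).Nonempty →
          ¬ (C' \ accU PU L i ⊂ (L.get ⟨i, hi⟩) \ accU PU L i) := by
  intro L
  induction L with
  | nil => intro PU _ i hi; exact absurd hi (by simp)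
  | cons K L ih =>
    intro PU h i hi
    cases i with
    | zero => exact ⟨h.2.2.1, h.2.2.2.1, h.2.2.2.2.1⟩
    | succ i =>
      exact ih (PU ∪ K) h.2.2.2.2.2 i (by simpa using hi)

lemma accU_succ :
    ∀ (L : List (Finset (Sym2 V × Bool))) (PU) (i : ℕ) (hi : i < L.length),
      accU PU L (i + 1) = accU PU L i ∪ L.get ⟨i, hi⟩ := by
  intro L
  induction L with
  | nil => intro PU i hi; exact absurd hi (by simp)
  | cons K L ih =>
    intro PU i hi
    cases i with
    | zero => simp [accU]
    | succ i =>
      have hi' : i < L.length := by simpa using hi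
      have := ih (PU ∪ K) i hi'
      simpa [accU] using this

lemma partialUnion_zero {m : ℕ} (Cs : Fin m → Finset (Sym2 V × Bool)) :
    partialUnion Cs 0 = ∅ := by
  simp [partialUnion]

lemma partialUnion_succ {m : ℕ} (Cs : Fin m → Finset (Sym2 V × Bool)) (i : ℕ)
    (hi : i < m) :
    partialUnion Cs (i + 1) = partialUnion Cs i ∪ Cs ⟨i, hi⟩ := by
  rw [partialUnion, partialUnion]
  have hfil : (Finset.univ.filter (fun j : Fin m => (j : ℕ) < i + 1))
      = insert ⟨i, hi⟩ (Finset.univ.filter (fun j : Fin m => (j : ℕ) < i)) := by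
    ext j
    simp only [Finset.mem_filter, Finset.mem_univ, true_and, Finset.mem_insert]
    constructor
    · intro hj
      rcases Nat.lt_succ_iff_lt_or_eq.1 hj with h | h
      · exact Or.inr h
      · exact Or.inl (Fin.ext h)
    · rintro (rfl | hj)
      · exact Nat.lt_succ_self i
      · exact Nat.lt_succ_of_lt hj
  rw [hfil, Finset.biUnion_insert]
  exact Finset.union_comm _ _

end DLGraph

end Assembly
/-- An M-connected mixed graph has an ear decomposition into mixed circuits. -/
theorem stmt2 {V : Type} [DecidableEq V] (G : DLGraph V)
    (hG : G.WellFormed) (hmix : G.Mixed) (hMC : G.MConnected) :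
    ∃ (m : ℕ) (Cs : Fin m → Finset (Sym2 V × Bool)),
      G.IsEarDecomposition Cs ∧ ∀ i, DLGraph.MixedEdgeSet (Cs i) := by
  classical
  by_cases hgen : ∃ p : V → ℝ × ℝ, G.Generic p
  · obtain ⟨p0, hp0⟩ := hgen
    obtain ⟨d0, hd0⟩ := hmix.1
    obtain ⟨l0, hl0⟩ := hmix.2
    have he0 : ((d0, true) : Sym2 V × Bool) ∈ G.edges :=
      DLGraph.mem_edges_iff.2 (Or.inl ⟨rfl, hd0⟩)
    have hf0 : ((l0, false) : Sym2 V × Bool) ∈ G.edges :=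
      DLGraph.mem_edges_iff.2 (Or.inr ⟨rfl, hl0⟩)
    have hne0 : ((d0, true) : Sym2 V × Bool) ≠ (l0, false) := by
      intro h
      exact Bool.noConfusion (congrArg Prod.snd h)
    obtain ⟨C1, hC1circ, hd0C1, hl0C1⟩ := hMC.2 _ he0 _ hf0 hne0
    have hC1 : G.circ p0 C1 := by
      have := (DLGraph.isCircuit_iff hG hp0).1 hC1circ
      exact ⟨this.1, this.2⟩
    have hC1mix : DLGraph.MixedEdgeSet C1 := ⟨⟨_, hd0C1, rfl⟩, ⟨_, hl0C1, rfl⟩⟩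
    have hconn1 : G.connSet p0 C1 := fun a ha b hb =>
      ⟨C1, hC1, Finset.Subset.refl _, ha, hb⟩
    obtain ⟨L, hL⟩ := DLGraph.exists_chain hG hp0 hMC (G.edges \ C1).card C1
      hC1.1 hC1mix hconn1 le_rfl
    have hall : ∀ K ∈ (C1 :: L), G.IsCircuit K ∧ DLGraph.MixedEdgeSet K := by
      intro K hK
      rcases List.mem_cons.1 hK with rfl | hK'
      · exact ⟨hC1circ, hC1mix⟩
      · exact DLGraph.chain_all L C1 hL K hK'
    refine ⟨(C1 :: L).length, fun i => (C1 :: L).get i, ?_, ?_⟩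
    · have hPUacc : ∀ i : ℕ, i ≤ L.length →
          DLGraph.partialUnion (fun i : Fin (C1 :: L).length => (C1 :: L).get i) (i + 1)
            = DLGraph.accU C1 L i := by
        intro i
        induction i with
        | zero =>
          intro _
          have h0 : (0 : ℕ) < (C1 :: L).length := by simp
          rw [DLGraph.partialUnion_succ _ 0 h0, DLGraph.partialUnion_zero]
          show ∅ ∪ (C1 :: L).get ⟨0, h0⟩ = DLGraph.accU C1 L 0
          simp [DLGraph.accU]
        | succ i ihp =>
          intro hi
          have hi1 : i + 1 < (C1 :: L).length := by simp; omega
          have hiL : i < L.length := by omega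
          rw [DLGraph.partialUnion_succ _ (i+1) hi1, ihp (by omega),
            DLGraph.accU_succ L C1 i hiL]
          simp
      refine ⟨by simp, ?_, ?_, ?_⟩
      · intro i
        exact (hall _ (List.get_mem (C1 :: L) i)).1
      · show DLGraph.partialUnion
            (fun i : Fin (C1 :: L).length => (C1 :: L).get i) (L.length + 1) = G.edges
        rw [hPUacc L.length le_rfl]
        exact DLGraph.chain_final L C1 hL
      · intro i hi1
        obtain ⟨iv, hiv⟩ := i
        cases iv with
        | zero => exact absurd hi1 (by simp)
        | succ k =>
          have hkL : k < L.length := by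
            have hk2 : k + 1 < (C1 :: L).length := hiv
            simp at hk2
            omega
          have hPU : DLGraph.partialUnion
              (fun i : Fin (C1 :: L).length => (C1 :: L).get i) (k + 1)
              = DLGraph.accU C1 L k := hPUacc k (by omega)
          have hget : (C1 :: L).get ⟨k + 1, hiv⟩ = L.get ⟨k, hkL⟩ := by simp
          obtain ⟨ha, hb, hc⟩ := DLGraph.chain_at L C1 hL k hkL
          have hcoe : (((⟨k + 1, hiv⟩ : Fin (C1 :: L).length)) : ℕ) = k + 1 := rfl
          refine ⟨?_, ?_, ?_⟩
          · rw [hcoe, hPU]; simp only [hget]; exact ha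
          · rw [hcoe, hPU]; simp only [hget]; exact hb
          · rw [hcoe, hPU]; simp only [hget]; exact hc
    · intro i
      exact (hall _ (List.get_mem (C1 :: L) i)).2
  · exfalso
    obtain ⟨a, ha, b, hb, hab⟩ := Finset.one_lt_card.1 hMC.1
    obtain ⟨C, hC, _, _⟩ := hMC.2 a ha b hb hab
    exact hC.2.1 (fun p hp => absurd ⟨p, hp⟩ hgen)
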